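/- Let Q, B², B³, H ∈ S³ be defined by: Q has rows (−1,−1,0), (−1,−1,0), (0,0,0); B² has rows (0,0,1/2), (0,0,1/2), (1/2,1/2,2); B³ has rows (0,0,−1/2), (0,0,−1/2), (−1/2,−1/2,2); H = diag(0,0,1). For every t ≥ 2, the matrix X(t) with rows (t,0,1), (0,t,1), (1,1,1) is positive semidefinite and satisfies B²•X(t) ≥ 0, B³•X(t) ≥ 0, H•X(t) = 1, and Q•X(t) = −2t. Consequently, the set {Q•X : X ∈ S³_+, B²•X ≥ 0, B³•X ≥ 0, H•X = 1} is not bounded below. -/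

import Mathlib

open Matrix

/-- The objective matrix `Q` of Instance 2.7. -/
noncomputable def Qc : Matrix (Fin 3) (Fin 3) ℝ :=
  !![-1, -1, 0; -1, -1, 0; 0, 0, 0]

/-- The constraint matrix `B²` of Instance 2.7. -/
noncomputable def B2c : Matrix (Fin 3) (Fin 3) ℝ :=
  !![0, 0, 1 / 2; 0, 0, 1 / 2; 1 / 2, 1 / 2, 2]

/-- The constraint matrix `B³` of Instance 2.7. -/
noncomputable def B3c : Matrix (Fin 3) (Fin 3) ℝ :=
  !![0, 0, -(1 / 2); 0, 0, -(1 / 2); -(1 / 2), -(1 / 2), 2]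

/-- The matrix `H = diag(0,0,1)`. -/
noncomputable def Hc : Matrix (Fin 3) (Fin 3) ℝ :=
  !![0, 0, 0; 0, 0, 0; 0, 0, 1]

/-- The feasible family `X(t)` of Instance 2.7. -/
noncomputable def Xc (t : ℝ) : Matrix (Fin 3) (Fin 3) ℝ :=
  !![t, 0, 1; 0, t, 1; 1, 1, 1]

lemma Xc_psd (t : ℝ) (ht : 2 ≤ t) : (Xc t).PosSemidef := by
  rw [Matrix.posSemidef_iff_dotProduct_mulVec]
  constructor
  · ext i j
    fin_cases i <;> fin_cases j <;> simp [Xc, Matrix.conjTranspose, Matrix.vecHead, Matrix.vecTail]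
  · intro x
    simp only [Xc, RCLike.star_def, dotProduct, mulVec, Fin.sum_univ_three]
    simp [Matrix.vecHead, Matrix.vecTail]
    nlinarith [sq_nonneg (2 * x 0 + x 2), sq_nonneg (2 * x 1 + x 2),
      mul_nonneg (by linarith : (0:ℝ) ≤ t - 2) (sq_nonneg (x 0)),
      mul_nonneg (by linarith : (0:ℝ) ≤ t - 2) (sq_nonneg (x 1))]

lemma feasible (t : ℝ) (ht : 2 ≤ t) : (Xc t).PosSemidef ∧
      0 ≤ (∑ i, ∑ j, B2c i j * Xc t i j) ∧
      0 ≤ (∑ i, ∑ j, B3c i j * Xc t i j) ∧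
      (∑ i, ∑ j, Hc i j * Xc t i j) = 1 ∧
      (∑ i, ∑ j, Qc i j * Xc t i j) = -2 * t := by
  refine ⟨Xc_psd t ht, ?_, ?_, ?_, ?_⟩ <;>
    simp [Qc, B2c, B3c, Hc, Xc, Fin.sum_univ_three] <;> ring_nf <;> linarith

/-- for every `t ≥ 2`, `X(t)` is feasible for the SDP relaxation with
objective value `-2t`; consequently the SDP value set is not bounded below. -/
theorem sdp_unbounded_instance :
    (∀ t : ℝ, 2 ≤ t → (Xc t).PosSemidef ∧
      0 ≤ (∑ i, ∑ j, B2c i j * Xc t i j) ∧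
      0 ≤ (∑ i, ∑ j, B3c i j * Xc t i j) ∧
      (∑ i, ∑ j, Hc i j * Xc t i j) = 1 ∧
      (∑ i, ∑ j, Qc i j * Xc t i j) = -2 * t) ∧
    ¬ BddBelow {v : ℝ | ∃ X : Matrix (Fin 3) (Fin 3) ℝ, X.PosSemidef ∧
        0 ≤ (∑ i, ∑ j, B2c i j * X i j) ∧
        0 ≤ (∑ i, ∑ j, B3c i j * X i j) ∧
        (∑ i, ∑ j, Hc i j * X i j) = 1 ∧
        v = ∑ i, ∑ j, Qc i j * X i j} := by
  refine ⟨feasible, ?_⟩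
  rintro ⟨m, hm⟩
  set t : ℝ := max 2 ((1 - m) / 2) with htdef
  have ht : 2 ≤ t := le_max_left _ _
  have ht2 : (1 - m) / 2 ≤ t := le_max_right _ _
  obtain ⟨hpsd, h2, h3, hH, hQ⟩ := feasible t ht
  have hmem : (-2 * t) ∈ {v : ℝ | ∃ X : Matrix (Fin 3) (Fin 3) ℝ, X.PosSemidef ∧
        0 ≤ (∑ i, ∑ j, B2c i j * X i j) ∧
        0 ≤ (∑ i, ∑ j, B3c i j * X i j) ∧
        (∑ i, ∑ j, Hc i j * X i j) = 1 ∧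
        v = ∑ i, ∑ j, Qc i j * X i j} := ⟨Xc t, hpsd, h2, h3, hH, hQ.symm⟩
  have := hm hmem
  linarith
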